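/- arXiv:0908.0364 — 5 statements merged into one kernel-verified Lean document; each statement's English description precedes it below -/
import Mathlib

section
/- For all x ∈ ℝ³ and ξ ∈ ℝ³, the bi-quadratic form x₁²ξ₁² + x₂²ξ₂² + x₃²ξ₃² + 2(x₁²ξ₂² + x₂²ξ₃² + x₃²ξ₁²) − 2(x₁x₂ξ₁ξ₂ + x₁x₃ξ₁ξ₃ + x₂x₃ξ₂ξ₃) is nonnegative. -/
/-- Choi's bi-quadratic form in `x = (x₁,x₂,x₃)` and `ξ = (ξ₁,ξ₂,ξ₃)`
is nonnegative. -/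
theorem stmt4 (x1 x2 x3 ξ1 ξ2 ξ3 : ℝ) :
    0 ≤ x1 ^ 2 * ξ1 ^ 2 + x2 ^ 2 * ξ2 ^ 2 + x3 ^ 2 * ξ3 ^ 2
        + 2 * (x1 ^ 2 * ξ2 ^ 2 + x2 ^ 2 * ξ3 ^ 2 + x3 ^ 2 * ξ1 ^ 2)
        - 2 * (x1 * x2 * ξ1 * ξ2 + x1 * x3 * ξ1 * ξ3 + x2 * x3 * ξ2 * ξ3) := by
  nlinarith [sq_nonneg (x1*ξ1 - x2*ξ2), sq_nonneg (x2*ξ2 - x3*ξ3), sq_nonneg (x3*ξ3 - x1*ξ1), sq_nonneg (x1*ξ2 - x2*ξ1), sq_nonneg (x2*ξ3 - x3*ξ2), sq_nonneg (x3*ξ1 - x1*ξ3), sq_nonneg (x1*ξ2), sq_nonneg (x2*ξ3), sq_nonneg (x3*ξ1)]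
end

section
/- Let G(x) be the 2×2 symmetric matrix polynomial on ℝ² with entries G₁₁(x) = 2 − 2x₁⁴ − 4x₁²x₂² − 2x₂⁴, G₁₂(x) = G₂₁(x) = 3 − x₁³x₂ − x₁x₂³, and G₂₂(x) = 5 − x₁⁴ − 4x₁²x₂² − x₂⁴. Then G is uniformly matrix sos-concave: there exists a matrix polynomial F(ξ,x) in the joint variables (ξ,x) ∈ ℝ²×ℝ² such that −∇ₓₓ(ξᵀG(x)ξ) = F(ξ,x)ᵀF(ξ,x); in particular −∇ₓₓ(ξᵀG(x)ξ) is positive semidefinite for all x, ξ ∈ ℝ². -/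
open Matrix MvPolynomial

/-- The Hessian matrix of a scalar function on `ℝⁿ`. -/
noncomputable def hess {n : ℕ} (f : (Fin n → ℝ) → ℝ) (x : Fin n → ℝ) :
    Matrix (Fin n) (Fin n) ℝ :=
  Matrix.of fun i j => fderiv ℝ (fun y => fderiv ℝ f y (Pi.single j 1)) x (Pi.single i 1)

open ContinuousLinearMap in
private lemma hasFD_mono (c : ℝ) (m n : ℕ) (y : Fin 2 → ℝ) :
    HasFDerivAt (fun y : Fin 2 → ℝ => c * (y 0 ^ m * y 1 ^ n))
      ((c * (↑m * y 0 ^ (m-1) * y 1 ^ n)) • (proj 0 : (Fin 2 → ℝ) →L[ℝ] ℝ)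
       + (c * (y 0 ^ m * (↑n * y 1 ^ (n-1)))) • (proj 1 : (Fin 2 → ℝ) →L[ℝ] ℝ)) y := by
  have h0 : HasFDerivAt (fun y : Fin 2 → ℝ => y 0 ^ m)
      ((↑m * y 0 ^ (m-1) : ℝ) • (proj 0 : (Fin 2 → ℝ) →L[ℝ] ℝ)) y :=
    (hasDerivAt_pow m (y 0)).comp_hasFDerivAt y (hasFDerivAt_apply 0 y)
  have h1 : HasFDerivAt (fun y : Fin 2 → ℝ => y 1 ^ n)
      ((↑n * y 1 ^ (n-1) : ℝ) • (proj 1 : (Fin 2 → ℝ) →L[ℝ] ℝ)) y :=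
    (hasDerivAt_pow n (y 1)).comp_hasFDerivAt y (hasFDerivAt_apply 1 y)
  exact ((h0.mul h1).const_mul c).congr_fderiv (by
    ext w
    simp only [ContinuousLinearMap.add_apply, ContinuousLinearMap.smul_apply,
      ContinuousLinearMap.proj_apply, smul_eq_mul]
    ring)

open ContinuousLinearMap in
private lemma fderiv_single2 {f : (Fin 2 → ℝ) → ℝ} {P Q : ℝ} {y : Fin 2 → ℝ}
    (h : HasFDerivAt f (P • (proj 0 : (Fin 2 → ℝ) →L[ℝ] ℝ)
        + Q • (proj 1 : (Fin 2 → ℝ) →L[ℝ] ℝ)) y) :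
    fderiv ℝ f y (Pi.single 0 1) = P ∧ fderiv ℝ f y (Pi.single 1 1) = Q := by
  rw [h.fderiv]
  constructor <;>
    simp [Pi.single_apply, ContinuousLinearMap.add_apply, ContinuousLinearMap.smul_apply,
      ContinuousLinearMap.proj_apply]

private def fE (a b : ℝ) (y : Fin 2 → ℝ) : ℝ :=
  (2*a^2+6*a*b+5*b^2)
  + (-2*a^2-b^2) * (y 0 ^ 4 * y 1 ^ 0)
  + (-4*a^2-4*b^2) * (y 0 ^ 2 * y 1 ^ 2)
  + (-2*a^2-b^2) * (y 0 ^ 0 * y 1 ^ 4)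
  + (-2*a*b) * (y 0 ^ 3 * y 1 ^ 1)
  + (-2*a*b) * (y 0 ^ 1 * y 1 ^ 3)

private def gE0 (a b : ℝ) (y : Fin 2 → ℝ) : ℝ :=
  (-8*a^2-4*b^2) * (y 0 ^ 3 * y 1 ^ 0)
  + (-8*a^2-8*b^2) * (y 0 ^ 1 * y 1 ^ 2)
  + (-6*a*b) * (y 0 ^ 2 * y 1 ^ 1)
  + (-2*a*b) * (y 0 ^ 0 * y 1 ^ 3)

private def gE1 (a b : ℝ) (y : Fin 2 → ℝ) : ℝ :=
  (-8*a^2-4*b^2) * (y 0 ^ 0 * y 1 ^ 3)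
  + (-8*a^2-8*b^2) * (y 0 ^ 2 * y 1 ^ 1)
  + (-6*a*b) * (y 0 ^ 1 * y 1 ^ 2)
  + (-2*a*b) * (y 0 ^ 3 * y 1 ^ 0)

open ContinuousLinearMap in
private lemma hasFD_fE (a b : ℝ) (y : Fin 2 → ℝ) :
    HasFDerivAt (fE a b)
      ((gE0 a b y) • (proj 0 : (Fin 2 → ℝ) →L[ℝ] ℝ)
       + (gE1 a b y) • (proj 1 : (Fin 2 → ℝ) →L[ℝ] ℝ)) y := by
  have h := (((((hasFDerivAt_const (2*a^2+6*a*b+5*b^2) y).add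
    (hasFD_mono (-2*a^2-b^2) 4 0 y)).add
    (hasFD_mono (-4*a^2-4*b^2) 2 2 y)).add
    (hasFD_mono (-2*a^2-b^2) 0 4 y)).add
    (hasFD_mono (-2*a*b) 3 1 y)).add
    (hasFD_mono (-2*a*b) 1 3 y)
  exact h.congr_fderiv (by
    ext w
    simp only [ContinuousLinearMap.add_apply, ContinuousLinearMap.smul_apply,
      ContinuousLinearMap.proj_apply, ContinuousLinearMap.zero_apply, smul_eq_mul, gE0, gE1]
    norm_num
    ring)

open ContinuousLinearMap in
private lemma hasFD_gE0 (a b : ℝ) (y : Fin 2 → ℝ) :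
    HasFDerivAt (gE0 a b)
      ((-(24*a^2*y 0^2 + 8*a^2*y 1^2 + 12*a*b*y 0*y 1 + 12*b^2*y 0^2 + 8*b^2*y 1^2))
          • (proj 0 : (Fin 2 → ℝ) →L[ℝ] ℝ)
       + (-(16*a^2*y 0*y 1 + 6*a*b*y 0^2 + 6*a*b*y 1^2 + 16*b^2*y 0*y 1))
          • (proj 1 : (Fin 2 → ℝ) →L[ℝ] ℝ)) y := by
  have h := (((hasFD_mono (-8*a^2-4*b^2) 3 0 y).add
    (hasFD_mono (-8*a^2-8*b^2) 1 2 y)).add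
    (hasFD_mono (-6*a*b) 2 1 y)).add
    (hasFD_mono (-2*a*b) 0 3 y)
  exact h.congr_fderiv (by
    ext w
    simp only [ContinuousLinearMap.add_apply, ContinuousLinearMap.smul_apply,
      ContinuousLinearMap.proj_apply, smul_eq_mul]
    norm_num
    ring)

open ContinuousLinearMap in
private lemma hasFD_gE1 (a b : ℝ) (y : Fin 2 → ℝ) :
    HasFDerivAt (gE1 a b)
      ((-(16*a^2*y 0*y 1 + 6*a*b*y 0^2 + 6*a*b*y 1^2 + 16*b^2*y 0*y 1))
          • (proj 0 : (Fin 2 → ℝ) →L[ℝ] ℝ)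
       + (-(8*a^2*y 0^2 + 24*a^2*y 1^2 + 12*a*b*y 0*y 1 + 8*b^2*y 0^2 + 12*b^2*y 1^2))
          • (proj 1 : (Fin 2 → ℝ) →L[ℝ] ℝ)) y := by
  have h := (((hasFD_mono (-8*a^2-4*b^2) 0 3 y).add
    (hasFD_mono (-8*a^2-8*b^2) 2 1 y)).add
    (hasFD_mono (-6*a*b) 1 2 y)).add
    (hasFD_mono (-2*a*b) 3 0 y)
  exact h.congr_fderiv (by
    ext w
    simp only [ContinuousLinearMap.add_apply, ContinuousLinearMap.smul_apply,
      ContinuousLinearMap.proj_apply, smul_eq_mul]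
    norm_num
    ring)

private lemma hess_fE (a b : ℝ) (x : Fin 2 → ℝ) :
    -(hess (fE a b) x) =
      !![24*a^2*x 0^2 + 8*a^2*x 1^2 + 12*a*b*x 0*x 1 + 12*b^2*x 0^2 + 8*b^2*x 1^2,
         16*a^2*x 0*x 1 + 6*a*b*x 0^2 + 6*a*b*x 1^2 + 16*b^2*x 0*x 1;
         16*a^2*x 0*x 1 + 6*a*b*x 0^2 + 6*a*b*x 1^2 + 16*b^2*x 0*x 1,
         8*a^2*x 0^2 + 24*a^2*x 1^2 + 12*a*b*x 0*x 1 + 8*b^2*x 0^2 + 12*b^2*x 1^2] := by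
  have e0 : (fun y => fderiv ℝ (fE a b) y (Pi.single 0 1)) = gE0 a b :=
    funext fun y => (fderiv_single2 (hasFD_fE a b y)).1
  have e1 : (fun y => fderiv ℝ (fE a b) y (Pi.single 1 1)) = gE1 a b :=
    funext fun y => (fderiv_single2 (hasFD_fE a b y)).2
  have h00 := (fderiv_single2 (hasFD_gE0 a b x)).1
  have h01 := (fderiv_single2 (hasFD_gE0 a b x)).2
  have h10 := (fderiv_single2 (hasFD_gE1 a b x)).1
  have h11 := (fderiv_single2 (hasFD_gE1 a b x)).2
  ext i j
  fin_cases i <;> fin_cases j <;>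
    simp only [Fin.mk_zero, Fin.mk_one, hess, Matrix.neg_apply, Matrix.of_apply, Fin.isValue,
      e0, e1, h00, h01, h10, h11, Matrix.cons_val', Matrix.cons_val_zero, Matrix.cons_val_one,
      Matrix.head_cons, Matrix.head_fin_const, Matrix.empty_val',
      Matrix.cons_val_fin_one, neg_neg]

private noncomputable def pA : MvPolynomial (Fin 2 ⊕ Fin 2) ℝ := X (Sum.inl 0)
private noncomputable def pB : MvPolynomial (Fin 2 ⊕ Fin 2) ℝ := X (Sum.inl 1)
private noncomputable def pU : MvPolynomial (Fin 2 ⊕ Fin 2) ℝ := X (Sum.inr 0)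
private noncomputable def pV : MvPolynomial (Fin 2 ⊕ Fin 2) ℝ := X (Sum.inr 1)

private noncomputable def Fm : Matrix (Fin 18) (Fin 2) (MvPolynomial (Fin 2 ⊕ Fin 2) ℝ) :=
  !![3*pA*pU + 2*pB*pV, 3*pA*pV + 2*pB*pU;
     2*pA*pU, 2*pA*pV;
     pA*pU, pA*pV;
     pA*pU, pA*pV;
     pA*pU, pA*pV;
     2*pA*pU, 0;
     2*pA*pU, 0;
     2*pA*pV, 0;
     2*pA*pV, 0;
     0, 2*pA*pU;
     0, 2*pA*pU;
     0, 2*pA*pV;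
     0, 2*pA*pV;
     3*pB*pU, 3*pB*pV;
     pB*pU, pB*pV;
     pB*pU, -(pB*pV);
     pB*pU, -(pB*pV);
     2*pB*pV, 2*pB*pU]

private lemma key (ξ x : Fin 2 → ℝ) :
    (!![24*(ξ 0)^2*x 0^2 + 8*(ξ 0)^2*x 1^2 + 12*(ξ 0)*(ξ 1)*x 0*x 1 + 12*(ξ 1)^2*x 0^2 + 8*(ξ 1)^2*x 1^2,
        16*(ξ 0)^2*x 0*x 1 + 6*(ξ 0)*(ξ 1)*x 0^2 + 6*(ξ 0)*(ξ 1)*x 1^2 + 16*(ξ 1)^2*x 0*x 1;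
        16*(ξ 0)^2*x 0*x 1 + 6*(ξ 0)*(ξ 1)*x 0^2 + 6*(ξ 0)*(ξ 1)*x 1^2 + 16*(ξ 1)^2*x 0*x 1,
        8*(ξ 0)^2*x 0^2 + 24*(ξ 0)^2*x 1^2 + 12*(ξ 0)*(ξ 1)*x 0*x 1 + 8*(ξ 1)^2*x 0^2 + 12*(ξ 1)^2*x 1^2] : Matrix (Fin 2) (Fin 2) ℝ)
      = (Matrix.of fun i j => eval (Sum.elim ξ x) (Fm i j))ᵀ
        * (Matrix.of fun i j => eval (Sum.elim ξ x) (Fm i j)) := by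
  ext i j
  fin_cases i <;> fin_cases j <;>
  · simp [Matrix.mul_apply, Fin.sum_univ_succ, Fm, pA, pB, pU, pV]
    ring

/-- the concrete `2×2` quartic matrix polynomial `G` of Example 2.5 is
uniformly matrix sos-concave: `-∇ₓₓ(ξᵀG(x)ξ) = F(ξ,x)ᵀ F(ξ,x)` for a single matrix
polynomial `F` in the joint variables `(ξ,x)`; in particular `-∇ₓₓ(ξᵀG(x)ξ) ⪰ 0`
for all `x, ξ ∈ ℝ²`. -/
theorem stmt6
    (G : (Fin 2 → ℝ) → Matrix (Fin 2) (Fin 2) ℝ)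
    (hG : ∀ x, G x =
      !![2 - 2 * x 0 ^ 4 - 4 * x 0 ^ 2 * x 1 ^ 2 - 2 * x 1 ^ 4,
         3 - x 0 ^ 3 * x 1 - x 0 * x 1 ^ 3;
         3 - x 0 ^ 3 * x 1 - x 0 * x 1 ^ 3,
         5 - x 0 ^ 4 - 4 * x 0 ^ 2 * x 1 ^ 2 - x 1 ^ 4]) :
    (∃ (k : ℕ) (F : Matrix (Fin k) (Fin 2) (MvPolynomial (Fin 2 ⊕ Fin 2) ℝ)),
      ∀ (ξ : Fin 2 → ℝ) (x : Fin 2 → ℝ),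
        -(hess (fun y => ξ ⬝ᵥ (G y).mulVec ξ) x)
          = (Matrix.of fun i j => eval (Sum.elim ξ x) (F i j))ᵀ
            * (Matrix.of fun i j => eval (Sum.elim ξ x) (F i j)))
    ∧ (∀ (x ξ : Fin 2 → ℝ),
        (-(hess (fun y => ξ ⬝ᵥ (G y).mulVec ξ) x)).PosSemidef) := by
  have hfun : ∀ ξ : Fin 2 → ℝ, (fun y => ξ ⬝ᵥ (G y).mulVec ξ) = fE (ξ 0) (ξ 1) := by
    intro ξ
    funext y
    simp [hG, dotProduct, Matrix.mulVec, Fin.sum_univ_two, fE]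
    ring
  have key2 : ∀ (ξ x : Fin 2 → ℝ),
      -(hess (fun y => ξ ⬝ᵥ (G y).mulVec ξ) x)
        = (Matrix.of fun i j => eval (Sum.elim ξ x) (Fm i j))ᵀ
          * (Matrix.of fun i j => eval (Sum.elim ξ x) (Fm i j)) := by
    intro ξ x
    rw [hfun, hess_fE]
    exact key ξ x
  refine ⟨⟨18, Fm, key2⟩, fun x ξ => ?_⟩
  rw [key2]
  have := Matrix.posSemidef_conjTranspose_mul_self
    (Matrix.of fun i j => eval (Sum.elim ξ x) (Fm i j))
  rwa [Matrix.conjTranspose_eq_transpose_of_trivial] at this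
end

section
/- Let G(x) be an m×m symmetric matrix polynomial on ℝⁿ that is matrix sos-concave, let Λ be a positive semidefinite symmetric m×m matrix, let a ∈ ℝⁿ, b ∈ ℝ, and define the polynomial f(x) = aᵀx − Λ • G(x) − b. If there exists u ∈ ℝⁿ with f(u) = 0 and ∇f(u) = 0, then f is a sum of squares of polynomials. -/
open Matrix MvPolynomial

section Helpers
open Polynomial

noncomputable def pD {n : ℕ} (p : MvPolynomial (Fin n) ℝ) (x : Fin n → ℝ) :
    (Fin n → ℝ) →L[ℝ] ℝ :=
  ∑ i, eval x (pderiv i p) • (ContinuousLinearMap.proj i : (Fin n → ℝ) →L[ℝ] ℝ)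

theorem hasFDerivAt_eval {n : ℕ} (p : MvPolynomial (Fin n) ℝ) (x : Fin n → ℝ) :
    HasFDerivAt (fun y => eval y p) (pD p x) x := by
  induction p using MvPolynomial.induction_on with
  | C a =>
      simp only [MvPolynomial.eval_C]
      have : pD (C a : MvPolynomial (Fin n) ℝ) x = 0 := by
        simp [pD]
      rw [this]
      exact hasFDerivAt_const _ _
  | add p q hp hq =>
      have : pD (p + q) x = pD p x + pD q x := by
        simp [pD, Finset.sum_add_distrib, add_smul]
      have h' : HasFDerivAt (fun y => eval y p + eval y q) (pD p x + pD q x) x := hp.add hq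
      simpa [this] using h'
  | mul_X p j hp =>
      have hX : HasFDerivAt (fun y : Fin n → ℝ => y j)
          (ContinuousLinearMap.proj j : (Fin n → ℝ) →L[ℝ] ℝ) x :=
        (ContinuousLinearMap.proj j : (Fin n → ℝ) →L[ℝ] ℝ).hasFDerivAt
      have h := hp.mul hX
      have heq : pD (p * X j) x
          = eval x p • (ContinuousLinearMap.proj j : (Fin n → ℝ) →L[ℝ] ℝ) + x j • pD p x := by
        simp only [pD, pderiv_mul, pderiv_X, map_add, _root_.map_mul, MvPolynomial.eval_X, MvPolynomial.eval_mul, Finset.smul_sum, smul_smul, add_smul]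
        rw [Finset.sum_add_distrib, add_comm ((eval x p) • (ContinuousLinearMap.proj j : (Fin n → ℝ) →L[ℝ] ℝ))]
        congr 1
        · apply Finset.sum_congr rfl
          intro i _
          congr 1
          ring
        · rw [Finset.sum_eq_single j]
          · simp [Pi.single_apply]
          · intro i _ hij; simp [Pi.single_apply, hij]
          · simp
      rw [heq]
      have h' : HasFDerivAt (fun y => eval y p * y j)
          (eval x p • (ContinuousLinearMap.proj j : (Fin n → ℝ) →L[ℝ] ℝ) + x j • pD p x) x := h
      simpa using h'

theorem fderiv_eval_single {n : ℕ} (p : MvPolynomial (Fin n) ℝ) (x : Fin n → ℝ) (i : Fin n) :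
    fderiv ℝ (fun y => eval y p) x (Pi.single i 1) = eval x (pderiv i p) := by
  rw [(hasFDerivAt_eval p x).fderiv]
  simp only [pD, ContinuousLinearMap.sum_apply, ContinuousLinearMap.smul_apply,
    ContinuousLinearMap.proj_apply]
  rw [Finset.sum_eq_single i]
  · simp
  · intro k _ hk; simp [Pi.single_apply, hk]
  · simp

theorem hess_eval {n : ℕ} (p : MvPolynomial (Fin n) ℝ) (x : Fin n → ℝ) (i j : Fin n) :
    hess (fun y => eval y p) x i j = eval x (pderiv i (pderiv j p)) := by
  unfold hess
  simp only [Matrix.of_apply]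
  have h1 : (fun y => fderiv ℝ (fun z => eval z p) y (Pi.single j 1))
      = fun y => eval y (pderiv j p) := funext fun y => fderiv_eval_single p y j
  rw [h1, fderiv_eval_single]

noncomputable def wgt (m : ℕ) : ℝ := ((m + 1 : ℝ) * (m + 2 : ℝ))⁻¹

noncomputable def Tint {R : Type*} [CommRing R] [Algebra ℝ R] (h : Polynomial R) : R :=
  h.sum fun m a => wgt m • a

theorem Tint_monomial {R : Type*} [CommRing R] [Algebra ℝ R] (m : ℕ) (a : R) :
    Tint (monomial m a) = wgt m • a := by
  unfold Tint
  rw [Polynomial.sum_monomial_index]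
  simp

theorem Tint_add {R : Type*} [CommRing R] [Algebra ℝ R] (h g : Polynomial R) :
    Tint (h + g) = Tint h + Tint g := by
  unfold Tint
  rw [Polynomial.sum_add_index] <;> simp [smul_add]

theorem Tint_zero {R : Type*} [CommRing R] [Algebra ℝ R] : Tint (0 : Polynomial R) = 0 := by
  simp [Tint]

theorem Tint_sum {R : Type*} [CommRing R] [Algebra ℝ R] {ι : Type*} (s : Finset ι)
    (g : ι → Polynomial R) : Tint (∑ i ∈ s, g i) = ∑ i ∈ s, Tint (g i) := by
  classical
  induction s using Finset.cons_induction with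
  | empty => simp [Tint_zero]
  | cons i s hi ih => rw [Finset.sum_cons, Finset.sum_cons, Tint_add, ih]

theorem Tint_dd {R : Type*} [CommRing R] [Algebra ℝ R] (h : Polynomial R) :
    Tint (derivative (derivative h)) = h.eval 1 - h.eval 0 - (derivative h).eval 0 := by
  induction h using Polynomial.induction_on' with
  | add p q hp hq =>
      rw [map_add, map_add, Tint_add, hp, hq, Polynomial.eval_add, Polynomial.eval_add,
        Polynomial.eval_add]
      ring
  | monomial m a =>
      match m with
      | 0 => simp [Tint_zero]
      | 1 => simp [Tint_zero]
      | (k + 2) =>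
          rw [derivative_monomial, derivative_monomial]
          simp only [Nat.add_sub_cancel, Nat.succ_sub_one]
          rw [Tint_monomial]
          have : a * (↑(k + 2) : R) * (↑(k + 1) : R) = ((k + 2) * (k + 1) : ℕ) • a := by
            push_cast
            rw [nsmul_eq_mul]
            push_cast
            ring
          rw [this, ← Nat.cast_smul_eq_nsmul ℝ, smul_smul]
          have hw : wgt k * (((k + 2) * (k + 1) : ℕ) : ℝ) = 1 := by
            unfold wgt
            push_cast
            field_simp
          rw [hw, one_smul]
          simp [Polynomial.eval_monomial]


theorem wgt_integral (m : ℕ) : ∫ t in (0:ℝ)..1, (1 - t) * t ^ m = wgt m := by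
  have h1 : ∀ t : ℝ, (1 - t) * t ^ m = t ^ m - t ^ (m + 1) := by intro t; ring
  simp only [h1]
  rw [intervalIntegral.integral_sub (intervalIntegral.intervalIntegrable_pow m)
    (intervalIntegral.intervalIntegrable_pow (m+1)), integral_pow, integral_pow]
  unfold wgt
  have hm1 : (m : ℝ) + 1 ≠ 0 := by positivity
  have hm2 : (m : ℝ) + 1 + 1 ≠ 0 := by positivity
  simp only [one_pow, zero_pow (Nat.succ_ne_zero _)]
  push_cast
  field_simp
  ring_nf

theorem momentMatrix_posSemidef (N : ℕ) :
    (Matrix.of fun k l : Fin N => wgt (k + l) : Matrix (Fin N) (Fin N) ℝ).PosSemidef := by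
  rw [Matrix.posSemidef_iff_dotProduct_mulVec]
  constructor
  · ext k l
    simp [Matrix.conjTranspose_apply, Matrix.of_apply, add_comm (l:ℕ) (k:ℕ)]
  · intro y
    have key : (star y) ⬝ᵥ (Matrix.of fun k l : Fin N => wgt (k + l)).mulVec y
        = ∫ t in (0:ℝ)..1, (1 - t) * (∑ k : Fin N, y k * t ^ (k : ℕ)) ^ 2 := by
      have expand : ∀ t : ℝ, (1 - t) * (∑ k : Fin N, y k * t ^ (k : ℕ)) ^ 2
          = ∑ k : Fin N, ∑ l : Fin N, (y k * y l) * ((1 - t) * t ^ ((k : ℕ) + (l : ℕ))) := by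
        intro t
        rw [sq, Finset.sum_mul_sum, Finset.mul_sum]
        refine Finset.sum_congr rfl fun k _ => ?_
        rw [Finset.mul_sum]
        refine Finset.sum_congr rfl fun l _ => ?_
        rw [pow_add]; ring
      simp only [expand]
      have integ : ∀ (c : ℝ) (m : ℕ),
          IntervalIntegrable (fun t : ℝ => c * ((1 - t) * t ^ m)) MeasureTheory.volume 0 1 := by
        intro c m
        exact (continuous_const.mul
          ((continuous_const.sub continuous_id).mul (continuous_pow m))).intervalIntegrable _ _
      have hint1 : ∀ k ∈ (Finset.univ : Finset (Fin N)), IntervalIntegrable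
          (fun t : ℝ => ∑ l : Fin N, (y k * y l) * ((1 - t) * t ^ ((k : ℕ) + (l : ℕ))))
          MeasureTheory.volume 0 1 :=
        by
          intro k _
          have h := IntervalIntegrable.sum (μ := MeasureTheory.volume) (a := (0:ℝ)) (b := 1)
            (f := fun l : Fin N => fun t : ℝ => (y k * y l) * ((1 - t) * t ^ ((k : ℕ) + (l : ℕ))))
            Finset.univ (fun l _ => integ _ _)
          have he : (∑ l : Fin N, fun t : ℝ => (y k * y l) * ((1 - t) * t ^ ((k : ℕ) + (l : ℕ))))
              = fun t : ℝ => ∑ l : Fin N, (y k * y l) * ((1 - t) * t ^ ((k : ℕ) + (l : ℕ))) := by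
            funext t
            simp
          rwa [he] at h
      rw [intervalIntegral.integral_finset_sum hint1]
      refine Eq.symm (Finset.sum_congr rfl fun k _ => ?_)
      rw [intervalIntegral.integral_finset_sum (fun l _ => integ _ _)]
      simp only [dotProduct, Matrix.mulVec, Matrix.of_apply, Pi.star_apply,
        star_trivial]
      rw [Finset.mul_sum]
      refine Finset.sum_congr rfl fun l _ => ?_
      rw [intervalIntegral.integral_const_mul, wgt_integral]
      ring
    rw [key]
    apply intervalIntegral.integral_nonneg (by norm_num)
    intro t ht
    have h1 : 0 ≤ 1 - t := by linarith [ht.2]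
    positivity

open scoped MatrixOrder in
theorem psd_eq_conjTranspose_mul_self {N : Type*} [Fintype N] [DecidableEq N]
    {A : Matrix N N ℝ} (hA : A.PosSemidef) : ∃ B : Matrix N N ℝ, A = Bᴴ * B := by
  obtain ⟨B, hB⟩ := CStarAlgebra.nonneg_iff_eq_star_mul_self.mp hA.nonneg
  exact ⟨B, hB⟩

theorem isSumSq_sum_sq {R : Type*} [CommRing R] {ι : Type*} (s : Finset ι) (g : ι → R) :
    IsSumSq (∑ i ∈ s, (g i) ^ 2) := by
  classical
  induction s using Finset.cons_induction with
  | empty => rw [Finset.sum_empty]; exact IsSumSq.zero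
  | cons i s hi ih =>
      rw [Finset.sum_cons, sq]
      exact IsSumSq.sq_add _ ih

theorem Tint_sq_isSumSq {R : Type*} [CommRing R] [Algebra ℝ R] (σ : Polynomial R) :
    IsSumSq (Tint (σ ^ 2)) := by
  classical
  set N := σ.natDegree + 1 with hN
  set c : Fin N → R := fun k => σ.coeff k with hc
  have hσ : σ = ∑ k : Fin N, Polynomial.monomial (k : ℕ) (c k) := by
    conv_lhs => rw [σ.as_sum_range' N (Nat.lt_succ_self _)]
    rw [Finset.sum_range fun k => Polynomial.monomial k (σ.coeff k)]
  obtain ⟨B, hB⟩ := psd_eq_conjTranspose_mul_self (momentMatrix_posSemidef N)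
  have hM : ∀ k l : Fin N, wgt ((k : ℕ) + (l : ℕ)) = ∑ r : Fin N, B r k * B r l := by
    intro k l
    have := congrFun (congrFun hB k) l
    simpa [Matrix.mul_apply, Matrix.conjTranspose_apply] using this
  have hsq : σ ^ 2 = ∑ k : Fin N, ∑ l : Fin N,
      Polynomial.monomial ((k : ℕ) + (l : ℕ)) (c k * c l) := by
    calc σ ^ 2 = (∑ k : Fin N, Polynomial.monomial (k : ℕ) (c k))
        * (∑ l : Fin N, Polynomial.monomial (l : ℕ) (c l)) := by rw [← hσ, sq]
      _ = _ := by
          rw [Finset.sum_mul_sum]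
          exact Finset.sum_congr rfl fun k _ => Finset.sum_congr rfl fun l _ =>
            Polynomial.monomial_mul_monomial _ _ _ _
  have hT : Tint (σ ^ 2) = ∑ r : Fin N, (∑ k : Fin N, B r k • c k) ^ 2 := by
    rw [hsq, Tint_sum]
    have inner : ∀ k : Fin N,
        Tint (∑ l : Fin N, Polynomial.monomial ((k : ℕ) + (l : ℕ)) (c k * c l))
          = ∑ l : Fin N, wgt ((k : ℕ) + (l : ℕ)) • (c k * c l) := by
      intro k
      rw [Tint_sum]
      exact Finset.sum_congr rfl fun l _ => Tint_monomial _ _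
    simp only [inner]
    have rhs : ∀ r : Fin N, (∑ k : Fin N, B r k • c k) ^ 2
        = ∑ k : Fin N, ∑ l : Fin N, (B r k * B r l) • (c k * c l) := by
      intro r
      rw [sq, Finset.sum_mul_sum]
      exact Finset.sum_congr rfl fun k _ => Finset.sum_congr rfl fun l _ =>
        smul_mul_smul_comm _ _ _ _
    simp only [rhs]
    conv_rhs => rw [Finset.sum_comm]
    refine Finset.sum_congr rfl fun k _ => ?_
    conv_rhs => rw [Finset.sum_comm]
    refine Finset.sum_congr rfl fun l _ => ?_
    rw [hM k l, Finset.sum_smul]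
  rw [hT]
  exact isSumSq_sum_sq _ _

variable {n : ℕ}

noncomputable def lineMap (u : Fin n → ℝ) :
    MvPolynomial (Fin n) ℝ →ₐ[ℝ] Polynomial (MvPolynomial (Fin n) ℝ) :=
  MvPolynomial.aeval fun i =>
    Polynomial.C (MvPolynomial.X i - MvPolynomial.C (u i)) * Polynomial.X
      + Polynomial.C (MvPolynomial.C (u i))

theorem lineMap_X (u : Fin n → ℝ) (i : Fin n) :
    lineMap u (MvPolynomial.X i)
      = Polynomial.C (MvPolynomial.X i - MvPolynomial.C (u i)) * Polynomial.X
        + Polynomial.C (MvPolynomial.C (u i)) := by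
  simp [lineMap]

theorem lineMap_C (u : Fin n → ℝ) (a : ℝ) :
    lineMap u (MvPolynomial.C a) = Polynomial.C (MvPolynomial.C a) := by
  simp [lineMap, MvPolynomial.algebraMap_eq]

theorem lineMap_eval_one (u : Fin n → ℝ) (p : MvPolynomial (Fin n) ℝ) :
    (lineMap u p).eval 1 = p := by
  induction p using MvPolynomial.induction_on with
  | C a => rw [lineMap_C]; simp
  | add p q hp hq => rw [map_add, Polynomial.eval_add, hp, hq]
  | mul_X p i hp =>
      rw [_root_.map_mul, Polynomial.eval_mul, hp, lineMap_X]
      simp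

theorem lineMap_eval_zero (u : Fin n → ℝ) (p : MvPolynomial (Fin n) ℝ) :
    (lineMap u p).eval 0 = MvPolynomial.C (eval u p) := by
  induction p using MvPolynomial.induction_on with
  | C a => rw [lineMap_C]; simp
  | add p q hp hq =>
      rw [map_add, Polynomial.eval_add, hp, hq]
      rw [map_add (MvPolynomial.eval u), map_add]
  | mul_X p i hp =>
      rw [_root_.map_mul, Polynomial.eval_mul, hp, lineMap_X]
      simp [_root_.map_mul]

theorem lineMap_derivative (u : Fin n → ℝ) (p : MvPolynomial (Fin n) ℝ) :
    derivative (lineMap u p) = ∑ i, Polynomial.C (MvPolynomial.X i - MvPolynomial.C (u i))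
      * lineMap u (pderiv i p) := by
  induction p using MvPolynomial.induction_on with
  | C a => rw [lineMap_C]; simp
  | add p q hp hq =>
      simp only [map_add, hp, hq, mul_add, Finset.sum_add_distrib]
  | mul_X p j hp =>
      have hdXj : derivative (lineMap u (MvPolynomial.X j))
          = Polynomial.C (MvPolynomial.X j - MvPolynomial.C (u j)) := by
        rw [lineMap_X]; simp
      have hpd : ∀ i : Fin n, pderiv i (p * MvPolynomial.X j)
          = pderiv i p * MvPolynomial.X j + p * MvPolynomial.C (if i = j then 1 else 0) := by
        intro i
        rw [pderiv_mul, pderiv_X]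
        congr 1
        by_cases h : i = j <;> simp [h, Pi.single_apply]
      have key : (∑ i, Polynomial.C (MvPolynomial.X i - MvPolynomial.C (u i))
            * lineMap u (pderiv i (p * MvPolynomial.X j)))
          = (∑ i, Polynomial.C (MvPolynomial.X i - MvPolynomial.C (u i))
              * lineMap u (pderiv i p)) * lineMap u (MvPolynomial.X j)
            + Polynomial.C (MvPolynomial.X j - MvPolynomial.C (u j)) * lineMap u p := by
        simp only [hpd, map_add, _root_.map_mul, mul_add, Finset.sum_add_distrib]
        congr 1
        · rw [Finset.sum_mul]
          exact Finset.sum_congr rfl fun i _ => by ring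
        · rw [Finset.sum_eq_single j]
          · simp
          · intro i _ hij
            simp [hij]
          · simp
      rw [key, _root_.map_mul, derivative_mul, hp, hdXj]
      ring

theorem isSumSq_finset_sum {R : Type*} [CommRing R] {ι : Type*} (s : Finset ι) (g : ι → R)
    (h : ∀ i ∈ s, IsSumSq (g i)) : IsSumSq (∑ i ∈ s, g i) := by
  classical
  induction s using Finset.cons_induction with
  | empty => rw [Finset.sum_empty]; exact IsSumSq.zero
  | cons i s hi ih =>
      rw [Finset.sum_cons]
      exact IsSumSq.add (h i (Finset.mem_cons_self i s))
        (ih fun j hj => h j (Finset.mem_cons_of_mem hj))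

theorem isSumSq_exists_fin {R : Type*} [CommRing R] {p : R} (h : IsSumSq p) :
    ∃ (k : ℕ) (q : Fin k → R), p = ∑ i, (q i) ^ 2 := by
  induction h with
  | zero => exact ⟨0, ![], by simp⟩
  | sq_add a pS ih =>
      obtain ⟨k, q, hq⟩ := ih
      refine ⟨k + 1, Fin.cons a q, ?_⟩
      rw [Fin.sum_univ_succ]
      simp [sq, hq]

theorem lineMap_dd {n : ℕ} (u : Fin n → ℝ) (p : MvPolynomial (Fin n) ℝ) :
    derivative (derivative (lineMap u p))
      = ∑ j, ∑ i, Polynomial.C (MvPolynomial.X i - MvPolynomial.C (u i))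
          * (Polynomial.C (MvPolynomial.X j - MvPolynomial.C (u j))
            * lineMap u (pderiv i (pderiv j p))) := by
  rw [lineMap_derivative, map_sum]
  refine Finset.sum_congr rfl fun j _ => ?_
  rw [derivative_C_mul, lineMap_derivative, Finset.mul_sum]
  refine Finset.sum_congr rfl fun i _ => ?_
  ring

theorem lineMap_taylor {n : ℕ} (u : Fin n → ℝ) (p : MvPolynomial (Fin n) ℝ)
    (h0 : MvPolynomial.eval u p = 0) (h1 : ∀ i, MvPolynomial.eval u (pderiv i p) = 0) :
    Tint (derivative (derivative (lineMap u p))) = p := by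
  rw [Tint_dd, lineMap_eval_one, lineMap_eval_zero, h0, lineMap_derivative]
  rw [Polynomial.eval_finset_sum]
  simp only [Polynomial.eval_mul, Polynomial.eval_C, lineMap_eval_zero, h1, map_zero, mul_zero]
  simp

theorem sum4_comm {α β γ : Type*} [Fintype α] [Fintype β] [Fintype γ] {δ : γ → Type*}
    [∀ c, Fintype (δ c)] {M : Type*} [AddCommMonoid M]
    (t : α → β → (c : γ) → δ c → M) :
    (∑ j : α, ∑ i : β, ∑ s : γ, ∑ r : δ s, t j i s r)
      = ∑ s : γ, ∑ r : δ s, ∑ i : β, ∑ j : α, t j i s r := by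
  calc (∑ j : α, ∑ i : β, ∑ s : γ, ∑ r : δ s, t j i s r)
      = ∑ j : α, ∑ s : γ, ∑ i : β, ∑ r : δ s, t j i s r :=
        Finset.sum_congr rfl fun j _ => Finset.sum_comm
    _ = ∑ s : γ, ∑ j : α, ∑ i : β, ∑ r : δ s, t j i s r := Finset.sum_comm
    _ = ∑ s : γ, ∑ j : α, ∑ r : δ s, ∑ i : β, t j i s r :=
        Finset.sum_congr rfl fun s _ => Finset.sum_congr rfl fun j _ => Finset.sum_comm
    _ = ∑ s : γ, ∑ r : δ s, ∑ j : α, ∑ i : β, t j i s r :=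
        Finset.sum_congr rfl fun s _ => Finset.sum_comm
    _ = ∑ s : γ, ∑ r : δ s, ∑ i : β, ∑ j : α, t j i s r :=
        Finset.sum_congr rfl fun s _ => Finset.sum_congr rfl fun r _ => Finset.sum_comm

end Helpers

open Polynomial in
/-- if `G` is a matrix sos-concave symmetric matrix polynomial, `Λ ⪰ 0`
is symmetric, and `f(x) = aᵀx − Λ • G(x) − b` vanishes together with its gradient at
some point `u`, then `f` is a sum of squares of polynomials. -/
theorem stmt13 (n m : ℕ)
    (Gp : Matrix (Fin m) (Fin m) (MvPolynomial (Fin n) ℝ))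
    (hGsym : ∀ i j, Gp i j = Gp j i)
    (G : (Fin n → ℝ) → Matrix (Fin m) (Fin m) ℝ)
    (hG : ∀ x, G x = Matrix.of fun i j => eval x (Gp i j))
    (hsos : ∀ ξ : Fin m → ℝ, ∃ (k : ℕ) (F : Matrix (Fin k) (Fin n) (MvPolynomial (Fin n) ℝ)),
      ∀ x : Fin n → ℝ,
        -(hess (fun y => ξ ⬝ᵥ (G y).mulVec ξ) x)
          = (Matrix.of fun i j => eval x (F i j))ᵀ * (Matrix.of fun i j => eval x (F i j)))
    (Λ : Matrix (Fin m) (Fin m) ℝ) (hΛsym : Λ.IsSymm) (hΛ : Λ.PosSemidef)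
    (a : Fin n → ℝ) (b : ℝ)
    (f : (Fin n → ℝ) → ℝ)
    (hf : ∀ x, f x = a ⬝ᵥ x - Matrix.trace (Λ * G x) - b)
    (u : Fin n → ℝ) (hfu : f u = 0) (hgrad : fderiv ℝ f u = 0) :
    ∃ (k : ℕ) (q : Fin k → MvPolynomial (Fin n) ℝ),
      ∀ x : Fin n → ℝ, f x = ∑ i, (eval x (q i)) ^ 2 := by
  classical
  set P : MvPolynomial (Fin n) ℝ :=
    (∑ i, MvPolynomial.C (a i) * MvPolynomial.X i)
      - (∑ i : Fin m, ∑ j : Fin m, MvPolynomial.C (Λ i j) * Gp j i)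
      - MvPolynomial.C b with hPdef
  have hfP : ∀ x, f x = MvPolynomial.eval x P := by
    intro x
    rw [hf x]
    have h1 : Matrix.trace (Λ * G x)
        = ∑ i : Fin m, ∑ j : Fin m, Λ i j * MvPolynomial.eval x (Gp j i) := by
      rw [Matrix.trace]
      refine Finset.sum_congr rfl fun i _ => ?_
      rw [Matrix.diag_apply, Matrix.mul_apply]
      refine Finset.sum_congr rfl fun j _ => ?_
      rw [hG x]
      rfl
    rw [h1, hPdef]
    simp [dotProduct]
  have hP0 : MvPolynomial.eval u P = 0 := by rw [← hfP u]; exact hfu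
  have hfeq : f = fun y => MvPolynomial.eval y P := funext hfP
  have hPgrad : ∀ i, MvPolynomial.eval u (pderiv i P) = 0 := by
    intro i
    rw [← fderiv_eval_single P u i, ← hfeq, hgrad]
    rfl
  obtain ⟨B, hB⟩ := psd_eq_conjTranspose_mul_self hΛ
  have hΛe : ∀ i j, Λ i j = ∑ s, B s i * B s j := by
    intro i j
    have := congrFun (congrFun hB i) j
    simpa [Matrix.mul_apply, Matrix.conjTranspose_apply] using this
  -- the quadratic forms
  have hqeval : ∀ (s : Fin m) (x : Fin n → ℝ), B s ⬝ᵥ (G x).mulVec (B s)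
      = MvPolynomial.eval x (∑ i : Fin m, ∑ j : Fin m,
          MvPolynomial.C (B s i) * MvPolynomial.C (B s j) * Gp i j) := by
    intro s x
    rw [hG x]
    simp only [dotProduct, Matrix.mulVec, Matrix.of_apply, map_sum, _root_.map_mul,
      MvPolynomial.eval_C, Finset.mul_sum]
    exact Finset.sum_congr rfl fun i _ => Finset.sum_congr rfl fun j _ => by ring
  choose ks F hF using fun s : Fin m => hsos (B s)
  have hHq : ∀ (s : Fin m) (i j : Fin n),
      pderiv i (pderiv j (∑ i' : Fin m, ∑ j' : Fin m,
          MvPolynomial.C (B s i') * MvPolynomial.C (B s j') * Gp i' j'))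
        = -(∑ r : Fin (ks s), F s r i * F s r j) := by
    intro s i j
    apply MvPolynomial.funext
    intro x
    have h := hF s x
    have hfun : (fun y => B s ⬝ᵥ (G y).mulVec (B s))
        = fun y => MvPolynomial.eval y (∑ i' : Fin m, ∑ j' : Fin m,
            MvPolynomial.C (B s i') * MvPolynomial.C (B s j') * Gp i' j') :=
      funext fun y => hqeval s y
    rw [hfun] at h
    have h2 := congrFun (congrFun h i) j
    rw [Matrix.neg_apply, hess_eval] at h2
    rw [Matrix.mul_apply] at h2
    simp only [Matrix.transpose_apply, Matrix.of_apply] at h2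
    have h3 : (MvPolynomial.eval x) (-(∑ r : Fin (ks s), F s r i * F s r j))
        = -(∑ r : Fin (ks s), (MvPolynomial.eval x) (F s r i)
            * (MvPolynomial.eval x) (F s r j)) := by
      simp
    rw [h3]
    linarith [h2]
  -- the quadratic part of P
  have hQ : (∑ i : Fin m, ∑ j : Fin m, MvPolynomial.C (Λ i j) * Gp j i)
      = ∑ s : Fin m, ∑ i : Fin m, ∑ j : Fin m,
          MvPolynomial.C (B s i) * MvPolynomial.C (B s j) * Gp i j := by
    have step1 : (∑ i : Fin m, ∑ j : Fin m, MvPolynomial.C (Λ i j) * Gp j i)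
        = ∑ i : Fin m, ∑ j : Fin m, ∑ s : Fin m,
            MvPolynomial.C (B s i) * MvPolynomial.C (B s j) * Gp i j := by
      refine Finset.sum_congr rfl fun i _ => Finset.sum_congr rfl fun j _ => ?_
      rw [hGsym j i, hΛe i j, map_sum, Finset.sum_mul]
      exact Finset.sum_congr rfl fun s _ => by rw [_root_.map_mul]
    rw [step1]
    calc (∑ i : Fin m, ∑ j : Fin m, ∑ s : Fin m,
            MvPolynomial.C (B s i) * MvPolynomial.C (B s j) * Gp i j)
        = ∑ i : Fin m, ∑ s : Fin m, ∑ j : Fin m,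
            MvPolynomial.C (B s i) * MvPolynomial.C (B s j) * Gp i j :=
          Finset.sum_congr rfl fun i _ => Finset.sum_comm
      _ = _ := Finset.sum_comm
  -- the Hessian of P
  have hHP : ∀ i j : Fin n, pderiv i (pderiv j P)
      = ∑ s : Fin m, ∑ r : Fin (ks s), F s r i * F s r j := by
    intro i j
    rw [hPdef, hQ]
    rw [map_sub, map_sub, map_sub, map_sub]
    have hlin : pderiv i (pderiv j (∑ k, MvPolynomial.C (a k) * MvPolynomial.X k))
        = 0 := by
      rw [map_sum, map_sum]
      refine Finset.sum_eq_zero fun k _ => ?_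
      rw [pderiv_mul, pderiv_C, pderiv_X]
      by_cases h : j = k <;> simp [h, Pi.single_apply]
    rw [hlin, pderiv_C, map_zero, map_sum, map_sum]
    simp only [hHq]
    simp
  -- Taylor expansion of P along the line through u
  have hTaylor := lineMap_taylor u P hP0 hPgrad
  have hdd : derivative (derivative (lineMap u P))
      = ∑ s : Fin m, ∑ r : Fin (ks s),
          (∑ i, Polynomial.C (MvPolynomial.X i - MvPolynomial.C (u i))
            * lineMap u (F s r i)) ^ 2 := by
    rw [lineMap_dd]
    have step1 : ∀ j i : Fin n,
        Polynomial.C (MvPolynomial.X i - MvPolynomial.C (u i))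
          * (Polynomial.C (MvPolynomial.X j - MvPolynomial.C (u j))
            * lineMap u (pderiv i (pderiv j P)))
        = ∑ s : Fin m, ∑ r : Fin (ks s),
            (Polynomial.C (MvPolynomial.X i - MvPolynomial.C (u i)) * lineMap u (F s r i))
              * (Polynomial.C (MvPolynomial.X j - MvPolynomial.C (u j))
                * lineMap u (F s r j)) := by
      intro j i
      rw [hHP i j, map_sum, Finset.mul_sum, Finset.mul_sum]
      refine Finset.sum_congr rfl fun s _ => ?_
      rw [map_sum, Finset.mul_sum, Finset.mul_sum]
      refine Finset.sum_congr rfl fun r _ => ?_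
      rw [_root_.map_mul]
      ring
    simp only [step1]
    rw [sum4_comm (t := fun (j i : Fin n) (s : Fin m) (r : Fin (ks s)) =>
      (Polynomial.C (MvPolynomial.X i - MvPolynomial.C (u i)) * lineMap u (F s r i))
        * (Polynomial.C (MvPolynomial.X j - MvPolynomial.C (u j)) * lineMap u (F s r j)))]
    refine Finset.sum_congr rfl fun s _ => Finset.sum_congr rfl fun r _ => ?_
    rw [sq, Finset.sum_mul_sum]
  have hPsum : P = ∑ s : Fin m, ∑ r : Fin (ks s),
      Tint ((∑ i, Polynomial.C (MvPolynomial.X i - MvPolynomial.C (u i))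
        * lineMap u (F s r i)) ^ 2) := by
    rw [← hTaylor, hdd, Tint_sum]
    exact Finset.sum_congr rfl fun s _ => Tint_sum _ _
  have hss : IsSumSq P := by
    rw [hPsum]
    exact isSumSq_finset_sum _ _ fun s _ => isSumSq_finset_sum _ _ fun r _ =>
      Tint_sq_isSumSq _
  obtain ⟨k, qq, hqq⟩ := isSumSq_exists_fin hss
  refine ⟨k, qq, fun x => ?_⟩
  rw [hfP x, hqq, map_sum]
  exact Finset.sum_congr rfl fun i _ => by rw [map_pow]
end

section
/- Let G(x) be the 2×2 symmetric matrix rational function on ℝ² given by G(x) = [[7−x₁+2x₂, 5],[5, 11−x₂]] − (1/(x₁x₂))·[[x₁ + x₂³, x₂²],[x₂², x₂]]. Then for all x, u ∈ ℝ² with x₁x₂ ≠ 0 and u₁u₂ ≠ 0, and all ξ ∈ ℝ², the identity x₁x₂u₁²u₂²·(ξᵀG(u)ξ + (∇ₓ(ξᵀG(x)ξ))|_{x=u} · (x−u) − ξᵀG(x)ξ) = x₂u₂²(u₁ξ₂ − x₁ξ₂ + u₁x₂ξ₁ − u₂x₁ξ₁)² + x₁u₁²ξ₁²(u₂ − x₂)²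 holds; in particular, G is uniformly q-module matrix concave over the nonnegative orthant ℝ₊² (with g₁(x) = x₁, g₂(x) = x₂). -/
open Matrix MvPolynomial

/-- A multivariate polynomial is a sum of squares. -/
def IsSos {σ : Type*} (f : MvPolynomial σ ℝ) : Prop :=
  ∃ (k : ℕ) (q : Fin k → MvPolynomial σ ℝ), f = ∑ i, q i ^ 2

lemma isSos_zero {σ : Type*} : IsSos (0 : MvPolynomial σ ℝ) :=
  ⟨0, fun _ => 0, by simp⟩

lemma isSos_sq {σ : Type*} (p : MvPolynomial σ ℝ) : IsSos (p ^ 2) :=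
  ⟨1, fun _ => p, by simp⟩

/-- Example 4.4: for the concrete `2×2` matrix rational function `G`
with denominator `x₁x₂`, the stated sos identity holds, and consequently `G` is
uniformly q-module matrix concave over the nonnegative orthant `ℝ₊²`
(with `g₀ = 1, g₁(x) = x₁, g₂(x) = x₂`). -/
theorem stmt17
    (G : (Fin 2 → ℝ) → Matrix (Fin 2) (Fin 2) ℝ)
    (hG : ∀ x, G x =
      !![7 - x 0 + 2 * x 1, 5; 5, 11 - x 1]
        - (x 0 * x 1)⁻¹ • !![x 0 + x 1 ^ 3, x 1 ^ 2; x 1 ^ 2, x 1]) :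
    -- the explicit identity
    (∀ (x u : Fin 2 → ℝ) (ξ : Fin 2 → ℝ), x 0 * x 1 ≠ 0 → u 0 * u 1 ≠ 0 →
      x 0 * x 1 * (u 0) ^ 2 * (u 1) ^ 2 *
        (ξ ⬝ᵥ (G u).mulVec ξ
          + fderiv ℝ (fun y => ξ ⬝ᵥ (G y).mulVec ξ) u (x - u)
          - ξ ⬝ᵥ (G x).mulVec ξ)
      = x 1 * (u 1) ^ 2 *
          (u 0 * ξ 1 - x 0 * ξ 1 + u 0 * x 1 * ξ 0 - u 1 * x 0 * ξ 0) ^ 2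
        + x 0 * (u 0) ^ 2 * (ξ 0) ^ 2 * (u 1 - x 1) ^ 2)
    -- `G` is uniformly q-module matrix concave over `ℝ₊²`: there are sos polynomials
    -- `σ_{ij}(x,u,ξ)` in the joint variables such that
    -- `den(G)(x)·den(G)(u)²·(linearization error) = Σᵢ gᵢ(x) Σⱼ gⱼ(u) σ_{ij}(x,u,ξ)`
    ∧ (∃ σ : Fin 3 → Fin 3 → MvPolynomial (Fin 2 ⊕ Fin 2 ⊕ Fin 2) ℝ,
        (∀ i j, IsSos (σ i j)) ∧
        ∀ (x u ξ : Fin 2 → ℝ), x 0 * x 1 ≠ 0 → u 0 * u 1 ≠ 0 →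
          (x 0 * x 1) * (u 0 * u 1) ^ 2 *
            (ξ ⬝ᵥ (G u).mulVec ξ
              + fderiv ℝ (fun y => ξ ⬝ᵥ (G y).mulVec ξ) u (x - u)
              - ξ ⬝ᵥ (G x).mulVec ξ)
          = ∑ i : Fin 3, (![1, x 0, x 1] i) *
              ∑ j : Fin 3, (![1, u 0, u 1] j) *
                eval (Sum.elim x (Sum.elim u ξ)) (σ i j)) := by
  have key : ∀ (x u ξ : Fin 2 → ℝ), x 0 * x 1 ≠ 0 → u 0 * u 1 ≠ 0 →
      x 0 * x 1 * (u 0) ^ 2 * (u 1) ^ 2 *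
        (ξ ⬝ᵥ (G u).mulVec ξ
          + fderiv ℝ (fun y => ξ ⬝ᵥ (G y).mulVec ξ) u (x - u)
          - ξ ⬝ᵥ (G x).mulVec ξ)
      = x 1 * (u 1) ^ 2 *
          (u 0 * ξ 1 - x 0 * ξ 1 + u 0 * x 1 * ξ 0 - u 1 * x 0 * ξ 0) ^ 2
        + x 0 * (u 0) ^ 2 * (ξ 0) ^ 2 * (u 1 - x 1) ^ 2 := by
    intro x u ξ hx hu
    have hx0 : x 0 ≠ 0 := fun h => hx (by rw [h]; ring)
    have hx1 : x 1 ≠ 0 := fun h => hx (by rw [h]; ring)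
    have hu0 : u 0 ≠ 0 := fun h => hu (by rw [h]; ring)
    have hu1 : u 1 ≠ 0 := fun h => hu (by rw [h]; ring)
    have h0 := hasFDerivAt_apply (𝕜 := ℝ) (F' := fun _ : Fin 2 => ℝ) 0 u
    have h1 := hasFDerivAt_apply (𝕜 := ℝ) (F' := fun _ : Fin 2 => ℝ) 1 u
    have hpoly := ((((hasFDerivAt_const (7:ℝ) u).sub h0).add (h1.const_mul 2)).mul_const (ξ 0^2)
      |>.add_const (10*ξ 0*ξ 1)).add (((hasFDerivAt_const (11:ℝ) u).sub h1).mul_const (ξ 1^2))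
    have hN := (((h0.add ((h1.mul h1).mul h1)).mul_const (ξ 0^2)).add
        (((h1.mul h1).const_mul 2).mul_const (ξ 0*ξ 1))).add (h1.mul_const (ξ 1^2))
    have hD := h0.mul h1
    have hinv := (hasDerivAt_inv hu).comp_hasFDerivAt u hD
    have H := hpoly.sub (hN.mul hinv)
    have hfun : (fun y => ξ ⬝ᵥ (G y).mulVec ξ)
        = (fun y : Fin 2 → ℝ =>
            (7 - y 0 + 2 * y 1) * ξ 0 ^ 2 + 10 * ξ 0 * ξ 1 + (11 - y 1) * ξ 1 ^ 2 -
              ((y 0 + y 1 * y 1 * y 1) * ξ 0 ^ 2 + 2 * (y 1 * y 1) * (ξ 0 * ξ 1) + y 1 * ξ 1 ^ 2) *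
                ((fun y : ℝ => y⁻¹) ∘ fun y : Fin 2 → ℝ => y 0 * y 1) y) := by
      funext y
      simp [Function.comp, Matrix.mulVec, dotProduct, Fin.sum_univ_two, hG]
      ring
    have H' : HasFDerivAt (fun y : Fin 2 → ℝ =>
              (7 - y 0 + 2 * y 1) * ξ 0 ^ 2 + 10 * ξ 0 * ξ 1 + (11 - y 1) * ξ 1 ^ 2 -
                ((y 0 + y 1 * y 1 * y 1) * ξ 0 ^ 2 + 2 * (y 1 * y 1) * (ξ 0 * ξ 1) + y 1 * ξ 1 ^ 2) *
                  ((fun y : ℝ => y⁻¹) ∘ fun y : Fin 2 → ℝ => y 0 * y 1) y) _ u := H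
    rw [hfun, H'.fderiv]
    simp only [hG, Matrix.mulVec, dotProduct, Fin.sum_univ_two,
      Matrix.sub_apply, Matrix.smul_apply, smul_eq_mul,
      Matrix.cons_val', Matrix.cons_val_zero, Matrix.cons_val_one, Matrix.head_cons,
      Matrix.empty_val', Matrix.cons_val_fin_one, Matrix.head_fin_const,
      ContinuousLinearMap.coe_sub', ContinuousLinearMap.coe_add', Pi.sub_apply, Pi.add_apply,
      ContinuousLinearMap.coe_smul', Pi.smul_apply, ContinuousLinearMap.proj_apply,
      ContinuousLinearMap.zero_apply, Function.comp, ContinuousLinearMap.coe_zero, Pi.zero_apply,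
      Pi.mul_apply, Pi.pow_apply, Matrix.of_apply, Matrix.cons_val]
    field_simp
    ring
  refine ⟨key, ?_⟩
  set v0 : MvPolynomial (Fin 2 ⊕ Fin 2 ⊕ Fin 2) ℝ := X (.inl 0)
  set v1 : MvPolynomial (Fin 2 ⊕ Fin 2 ⊕ Fin 2) ℝ := X (.inl 1)
  set w0 : MvPolynomial (Fin 2 ⊕ Fin 2 ⊕ Fin 2) ℝ := X (.inr (.inl 0))
  set w1 : MvPolynomial (Fin 2 ⊕ Fin 2 ⊕ Fin 2) ℝ := X (.inr (.inl 1))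
  set z0 : MvPolynomial (Fin 2 ⊕ Fin 2 ⊕ Fin 2) ℝ := X (.inr (.inr 0))
  set z1 : MvPolynomial (Fin 2 ⊕ Fin 2 ⊕ Fin 2) ℝ := X (.inr (.inr 1))
  refine ⟨![![0, 0, 0],
            ![(w0 * z0 * (w1 - v1)) ^ 2, 0, 0],
            ![(w1 * (w0 * z1 - v0 * z1 + w0 * v1 * z0 - w1 * v0 * z0)) ^ 2, 0, 0]], ?_, ?_⟩
  · intro i j
    fin_cases i <;> fin_cases j <;>
      first
        | exact isSos_zero
        | exact isSos_sq _
  · intro x u ξ hx hu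
    have h := key x u ξ hx hu
    set d := fderiv ℝ (fun y => ξ ⬝ᵥ (G y).mulVec ξ) u (x - u) with hd
    simp only [Fin.sum_univ_three, Matrix.cons_val_zero, Matrix.cons_val_one, Matrix.head_cons,
      Matrix.cons_val_two, Matrix.tail_cons, v0, v1, w0, w1, z0, z1,
      map_add, map_sub, _root_.map_mul, map_pow, eval_X, Sum.elim_inl, Sum.elim_inr,
      map_zero, mul_zero, add_zero, zero_add, mul_one, one_mul]
    linear_combination h
end

section
/- Let Q(x) be the 3×3 symmetric matrix polynomial on ℝ² with rows [x₁x₂+2, x₁x₂, 0], [x₁x₂, x₁x₂−1, 0], [0, 0, x₁+x₂]. Then: (i) for every x ∈ ℝ² with x₁ ≥ 0 and x₂ ≥ 0, Q(x) ⪰ 0 if and only if x₁x₂ ≥ 2; hence {x ∈ ℝ₊² : Q(x) ⪰ 0} = {x ∈ ℝ₊² : x₁x₂ ≥ 2}, which is a convex set; (ii) nevertheless Q is not matrix concave on ℝ₊²: there exist ξ ∈ ℝ³, u, v ∈ ℝ₊² and θ ∈ [0,1] such that ξᵀQ(θu + (1−θ)v)ξ < θ·ξᵀQ(u)ξ + (1−θ)·ξᵀQ(v)ξ.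 -/
open Matrix

/-- for the concrete `3×3` matrix polynomial `Q` of the Conclusions
section: (i) on the nonnegative orthant, `Q(x) ⪰ 0` iff `x₁x₂ ≥ 2`, so
`{x ∈ ℝ₊² : Q(x) ⪰ 0} = {x ∈ ℝ₊² : x₁x₂ ≥ 2}`, which is convex; (ii) nevertheless `Q`
is not matrix concave on `ℝ₊²`. -/
theorem stmt19
    (Q : (Fin 2 → ℝ) → Matrix (Fin 3) (Fin 3) ℝ)
    (hQ : ∀ x, Q x =
      !![x 0 * x 1 + 2, x 0 * x 1, 0;
         x 0 * x 1, x 0 * x 1 - 1, 0;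
         0, 0, x 0 + x 1]) :
    -- (i)
    (∀ x : Fin 2 → ℝ, 0 ≤ x 0 → 0 ≤ x 1 → ((Q x).PosSemidef ↔ 2 ≤ x 0 * x 1))
    ∧ {x : Fin 2 → ℝ | 0 ≤ x 0 ∧ 0 ≤ x 1 ∧ (Q x).PosSemidef}
        = {x : Fin 2 → ℝ | 0 ≤ x 0 ∧ 0 ≤ x 1 ∧ 2 ≤ x 0 * x 1}
    ∧ Convex ℝ {x : Fin 2 → ℝ | 0 ≤ x 0 ∧ 0 ≤ x 1 ∧ (Q x).PosSemidef}
    -- (ii)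
    ∧ ∃ (ξ : Fin 3 → ℝ) (u v : Fin 2 → ℝ) (θ : ℝ),
        0 ≤ u 0 ∧ 0 ≤ u 1 ∧ 0 ≤ v 0 ∧ 0 ≤ v 1 ∧ 0 ≤ θ ∧ θ ≤ 1 ∧
        ξ ⬝ᵥ (Q (θ • u + (1 - θ) • v)).mulVec ξ
          < θ * (ξ ⬝ᵥ (Q u).mulVec ξ) + (1 - θ) * (ξ ⬝ᵥ (Q v).mulVec ξ) := by
  have key : ∀ x : Fin 2 → ℝ, 0 ≤ x 0 → 0 ≤ x 1 → ((Q x).PosSemidef ↔ 2 ≤ x 0 * x 1) := by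
    intro x h0 h1
    constructor
    · intro h
      have := h.dotProduct_mulVec_nonneg ![x 0 * x 1, -(x 0 * x 1 + 2), 0]
      rw [hQ] at this
      simp [Matrix.mulVec, dotProduct, Fin.sum_univ_succ] at this
      nlinarith [mul_nonneg h0 h1, this]
    · intro h
      rw [hQ]
      refine Matrix.PosSemidef.of_dotProduct_mulVec_nonneg ?_ ?_
      · rw [Matrix.IsHermitian]
        ext i j
        fin_cases i <;> fin_cases j <;> simp [Matrix.conjTranspose_apply]
      · intro ξ
        have hξ : (ξ ⬝ᵥ (!![x 0 * x 1 + 2, x 0 * x 1, 0;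
            x 0 * x 1, x 0 * x 1 - 1, 0;
            0, 0, x 0 + x 1] : Matrix (Fin 3) (Fin 3) ℝ).mulVec ξ) =
            (x 0 * x 1 + 2) * ξ 0 ^ 2 + 2 * (x 0 * x 1) * ξ 0 * ξ 1
              + (x 0 * x 1 - 1) * ξ 1 ^ 2 + (x 0 + x 1) * ξ 2 ^ 2 := by
          simp [Matrix.mulVec, dotProduct, Fin.sum_univ_succ]
          ring
        rw [show (star ξ : Fin 3 → ℝ) = ξ from rfl, hξ]
        nlinarith [sq_nonneg ((x 0 * x 1 + 2) * ξ 0 + (x 0 * x 1) * ξ 1),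
          sq_nonneg (ξ 1), sq_nonneg (ξ 2), mul_nonneg h0 h1,
          mul_nonneg (add_nonneg h0 h1) (sq_nonneg (ξ 2))]
  refine ⟨key, ?_, ?_, ?_⟩
  · ext x
    simp only [Set.mem_setOf_eq]
    constructor
    · rintro ⟨a, b, c⟩; exact ⟨a, b, (key x a b).mp c⟩
    · rintro ⟨a, b, c⟩; exact ⟨a, b, (key x a b).mpr c⟩
  · have hset : {x : Fin 2 → ℝ | 0 ≤ x 0 ∧ 0 ≤ x 1 ∧ (Q x).PosSemidef}
        = {x : Fin 2 → ℝ | 0 ≤ x 0 ∧ 0 ≤ x 1 ∧ 2 ≤ x 0 * x 1} := by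
      ext x
      simp only [Set.mem_setOf_eq]
      constructor
      · rintro ⟨a, b, c⟩; exact ⟨a, b, (key x a b).mp c⟩
      · rintro ⟨a, b, c⟩; exact ⟨a, b, (key x a b).mpr c⟩
    rw [hset]
    rintro x ⟨hx0, hx1, hx2⟩ y ⟨hy0, hy1, hy2⟩ a b ha hb hab
    refine ⟨?_, ?_, ?_⟩
    · simpa using add_nonneg (mul_nonneg ha hx0) (mul_nonneg hb hy0)
    · simpa using add_nonneg (mul_nonneg ha hx1) (mul_nonneg hb hy1)
    · have hcross : 4 ≤ x 0 * y 1 + y 0 * x 1 := by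
        nlinarith [sq_nonneg (x 0 * y 1 - y 0 * x 1), mul_nonneg hx0 hy1,
          mul_nonneg hy0 hx1, sq_nonneg (x 0 * y 1 + y 0 * x 1 - 4)]
      have : (a • x + b • y) 0 = a * x 0 + b * y 0 := by simp
      have h2 : (a • x + b • y) 1 = a * x 1 + b * y 1 := by simp
      rw [this, h2]
      nlinarith [sq_nonneg (a - b), mul_nonneg ha hb, mul_nonneg ha ha,
        mul_nonneg hb hb, mul_le_mul_of_nonneg_left hcross (mul_nonneg ha hb),
        mul_le_mul_of_nonneg_left hx2 (mul_nonneg ha ha),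
        mul_le_mul_of_nonneg_left hy2 (mul_nonneg hb hb)]
  · refine ⟨![1, 1, 0], ![0, 0], ![2, 2], 1/2, by norm_num, by norm_num, by norm_num,
      by norm_num, by norm_num, by norm_num, ?_⟩
    rw [hQ, hQ, hQ]
    norm_num [Matrix.mulVec, dotProduct, Fin.sum_univ_succ]
end
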